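/- (Two-level distributed HAPOD mode bound) In the setting of the two-level distributed HAPOD with partition S = S_1 ⊎ ... ⊎ S_r, local tolerances ε_i and root tolerance ε_ρ, the number of final HAPOD modes is at most the number of modes retained by a direct POD of the full family S with tolerance ε_ρ, i.e., |HAPOD output| ≤ min{ N : ∑_{m>N} σ_m(S)² ≤ ε_ρ² }, where σ_m(S) are the singular values of the full snapshot map. -/

import Mathlib

open Finset
open RealInnerProductSpace


lemma hapod_aux_card {K n : ℕ} (h : n ≤ K) :
    (univ.filter fun j : Fin K => (j : ℕ) < n).card = n := by
  classical
  have h2 : (univ.filter fun j : Fin K => (j : ℕ) < n)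
      = Finset.map (Fin.castLEEmb h) Finset.univ := by
    ext j
    simp only [Finset.mem_filter, Finset.mem_univ, true_and, Finset.mem_map,
      Fin.castLEEmb_apply]
    constructor
    · intro hj; exact ⟨⟨j, hj⟩, by ext; rfl⟩
    · rintro ⟨m, rfl⟩; exact m.2
  rw [h2, Finset.card_map, Finset.card_univ, Fintype.card_fin]

lemma hapod_aux_rearrange {K : ℕ} (n : ℕ) (g w : Fin K → ℝ)
    (hg : Antitone g) (hg0 : ∀ j, 0 ≤ g j)
    (hw0 : ∀ j, 0 ≤ w j) (hw1 : ∀ j, w j ≤ 1) (hws : ∑ j, w j ≤ (n : ℝ)) :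
    ∑ j ∈ univ.filter (fun j : Fin K => n ≤ (j : ℕ)), g j
      ≤ ∑ j, g j - ∑ j, g j * w j := by
  classical
  have hsplit := Finset.sum_filter_add_sum_filter_not (univ : Finset (Fin K))
    (fun j : Fin K => (j : ℕ) < n) (fun j => g j * (1 - w j))
  have hone : ∀ j, g j - g j * w j = g j * (1 - w j) := fun j => by ring
  have hRHS : ∑ j, g j - ∑ j, g j * w j = ∑ j, g j * (1 - w j) := by
    rw [← Finset.sum_sub_distrib]; exact Finset.sum_congr rfl fun j _ => hone j
  rw [hRHS]
  by_cases hK : n < K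
  · set c := g ⟨n, hK⟩ with hc
    have hc0 : 0 ≤ c := hg0 _
    -- sum over the "not <" part
    have hnotiff : ∀ j : Fin K, (¬ (j : ℕ) < n) ↔ n ≤ (j : ℕ) := fun j => not_lt
    have hfilt : (univ.filter fun j : Fin K => ¬ (j : ℕ) < n)
        = univ.filter fun j : Fin K => n ≤ (j : ℕ) := by
      apply Finset.filter_congr; intro j _; simp [hnotiff j]
    rw [hfilt] at hsplit
    rw [← hsplit]
    -- goal: ∑_{n≤j} g ≤ ∑_{j<n} g(1-w) + ∑_{n≤j} g(1-w)
    have key : ∑ j ∈ univ.filter (fun j : Fin K => n ≤ (j : ℕ)), g j * w j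
        ≤ ∑ j ∈ univ.filter (fun j : Fin K => (j : ℕ) < n), g j * (1 - w j) := by
      have h1 : ∑ j ∈ univ.filter (fun j : Fin K => n ≤ (j : ℕ)), g j * w j
          ≤ c * ∑ j ∈ univ.filter (fun j : Fin K => n ≤ (j : ℕ)), w j := by
        rw [Finset.mul_sum]
        apply Finset.sum_le_sum
        intro j hj
        have hjn : n ≤ (j : ℕ) := (Finset.mem_filter.mp hj).2
        have : g j ≤ c := hg (by simpa [Fin.le_def] using hjn)
        exact mul_le_mul_of_nonneg_right this (hw0 j) |>.trans_eq rfl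
      have h2 : c * ∑ j ∈ univ.filter (fun j : Fin K => (j : ℕ) < n), (1 - w j)
          ≤ ∑ j ∈ univ.filter (fun j : Fin K => (j : ℕ) < n), g j * (1 - w j) := by
        rw [Finset.mul_sum]
        apply Finset.sum_le_sum
        intro j hj
        have hjn : (j : ℕ) < n := (Finset.mem_filter.mp hj).2
        have hgc : c ≤ g j := hg (by simpa [Fin.le_def] using hjn.le)
        exact mul_le_mul_of_nonneg_right hgc (by linarith [hw1 j])
      refine h1.trans (le_trans ?_ h2)
      apply mul_le_mul_of_nonneg_left _ hc0
      -- ∑_{n≤j} w ≤ ∑_{j<n} (1 - w)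
      have hcard : (univ.filter fun j : Fin K => (j : ℕ) < n).card = n :=
        hapod_aux_card hK.le
      have hsum1 : ∑ j ∈ univ.filter (fun j : Fin K => (j : ℕ) < n), (1 - w j)
          = (n : ℝ) - ∑ j ∈ univ.filter (fun j : Fin K => (j : ℕ) < n), w j := by
        rw [Finset.sum_sub_distrib, Finset.sum_const, hcard]
        simp
      rw [hsum1]
      have hsplitw := Finset.sum_filter_add_sum_filter_not (univ : Finset (Fin K))
        (fun j : Fin K => (j : ℕ) < n) w
      rw [hfilt] at hsplitw
      linarith [hws, hsplitw]
    calc ∑ j ∈ univ.filter (fun j : Fin K => n ≤ (j : ℕ)), g j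
        = ∑ j ∈ univ.filter (fun j : Fin K => n ≤ (j : ℕ)), (g j * (1 - w j) + g j * w j) := by
          apply Finset.sum_congr rfl; intro j _; ring
      _ = ∑ j ∈ univ.filter (fun j : Fin K => n ≤ (j : ℕ)), g j * (1 - w j)
            + ∑ j ∈ univ.filter (fun j : Fin K => n ≤ (j : ℕ)), g j * w j := by
          rw [Finset.sum_add_distrib]
      _ ≤ ∑ j ∈ univ.filter (fun j : Fin K => n ≤ (j : ℕ)), g j * (1 - w j)
            + ∑ j ∈ univ.filter (fun j : Fin K => (j : ℕ) < n), g j * (1 - w j) := by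
          linarith [key]
      _ = _ := by ring
  · -- n ≥ K : left side is 0
    have hempty : (univ.filter fun j : Fin K => n ≤ (j : ℕ)) = ∅ := by
      apply Finset.filter_false_of_mem
      intro j _
      push_neg
      exact lt_of_lt_of_le j.2 (not_lt.mp hK)
    rw [hempty, Finset.sum_empty]
    apply Finset.sum_nonneg
    intro j _
    exact mul_nonneg (hg0 j) (by linarith [hw1 j])

/-- two-level distributed HAPOD mode bound: the number of final HAPOD modes
(the minimal `n` such that the tail of the singular values `τ` of the concatenated retained
scaled local modes is at most `ερ²`) is at most the number of modes a direct POD of the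
full snapshot family `S` with tolerance `ερ` would retain. -/
theorem distributed_hapod_mode_bound
    {V : Type*} [NormedAddCommGroup V] [InnerProductSpace ℝ V] [FiniteDimensional ℝ V]
    {r : ℕ} (k N : Fin r → ℕ) (hN : ∀ i, N i ≤ k i)
    (s : ∀ i, Fin (k i) → V)
    (σ : ∀ i, Fin (k i) → ℝ) (φ : ∀ i, Fin (k i) → V)
    (lam : ∀ i, Fin (k i) → EuclideanSpace ℝ (Fin (k i)))
    (hσa : ∀ i, Antitone (σ i)) (hσ0 : ∀ i j, 0 ≤ σ i j)
    (hφ : ∀ i, Orthonormal ℝ (φ i)) (hlam : ∀ i, Orthonormal ℝ (lam i))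
    (hs : ∀ i m, s i m = ∑ j, (σ i j * lam i j m) • φ i j)
    -- SVD of the concatenation of the retained scaled local modes
    {K : ℕ} (e : ((i : Fin r) × Fin (N i)) ≃ Fin K)
    (τ : Fin K → ℝ) (Φ : Fin K → V) (μ : Fin K → EuclideanSpace ℝ (Fin K))
    (hτa : Antitone τ) (hτ0 : ∀ j, 0 ≤ τ j)
    (hΦ : Orthonormal ℝ Φ) (hμ : Orthonormal ℝ μ)
    (hQ : ∀ i (n : Fin (N i)),
      σ i (Fin.castLE (hN i) n) • φ i (Fin.castLE (hN i) n)
        = ∑ jK, (τ jK * μ jK (e ⟨i, n⟩)) • Φ jK)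
    -- SVD of the full snapshot map
    {Kt : ℕ} (e' : ((i : Fin r) × Fin (k i)) ≃ Fin Kt)
    (σS : Fin Kt → ℝ) (φS : Fin Kt → V) (lamS : Fin Kt → EuclideanSpace ℝ (Fin Kt))
    (hσSa : Antitone σS) (hσS0 : ∀ j, 0 ≤ σS j)
    (hφS : Orthonormal ℝ φS) (hlamS : Orthonormal ℝ lamS)
    (hsS : ∀ i m, s i m = ∑ j, (σS j * lamS j (e' ⟨i, m⟩)) • φS j)
    (ερ : ℝ) :
    sInf {n : ℕ | ∑ jK ∈ univ.filter (fun jK : Fin K => n ≤ (jK : ℕ)), τ jK ^ 2 ≤ ερ ^ 2}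
      ≤ sInf {n : ℕ | ∑ j ∈ univ.filter (fun j : Fin Kt => n ≤ (j : ℕ)), σS j ^ 2 ≤ ερ ^ 2} := by
  classical
  -- the columns of the concatenated retained scaled local modes
  set Qc : ((i : Fin r) × Fin (N i)) → V :=
    fun c => σ c.1 (Fin.castLE (hN c.1) c.2) • φ c.1 (Fin.castLE (hN c.1) c.2) with hQcdef
  -- coefficients of `Qc` in the full SVD basis
  set b : Fin Kt → ((i : Fin r) × Fin (N i)) → ℝ :=
    fun j c => ∑ m, lam c.1 (Fin.castLE (hN c.1) c.2) m * lamS j (e' ⟨c.1, m⟩) with hbdef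
  -- Step 0: Qc as combination of snapshots
  have hQs : ∀ c, Qc c = ∑ m, lam c.1 (Fin.castLE (hN c.1) c.2) m • s c.1 m := by
    rintro ⟨i, n'⟩
    have horth := orthonormal_iff_ite.mp (hlam i)
    refine Eq.symm ?_
    calc (∑ m, lam i (Fin.castLE (hN i) n') m • s i m)
        = ∑ m, ∑ j, (lam i (Fin.castLE (hN i) n') m * (σ i j * lam i j m)) • φ i j := by
          refine Finset.sum_congr rfl fun m _ => ?_
          rw [hs i m, Finset.smul_sum]
          refine Finset.sum_congr rfl fun j _ => ?_
          rw [smul_smul]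
      _ = ∑ j, (∑ m, lam i (Fin.castLE (hN i) n') m * (σ i j * lam i j m)) • φ i j := by
          rw [Finset.sum_comm]
          refine Finset.sum_congr rfl fun j _ => ?_
          rw [Finset.sum_smul]
      _ = ∑ j, (σ i j * inner ℝ (lam i j) (lam i (Fin.castLE (hN i) n'))) • φ i j := by
          refine Finset.sum_congr rfl fun j _ => ?_
          congr 1
          rw [PiLp.inner_apply]
          simp only [RCLike.inner_apply, conj_trivial]
          rw [Finset.mul_sum]
          refine Finset.sum_congr rfl fun m _ => ?_
          ring
      _ = σ i (Fin.castLE (hN i) n') • φ i (Fin.castLE (hN i) n') := by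
          simp [horth, mul_ite, Finset.sum_ite_eq']
  -- Step 1: Qc in the full SVD basis
  have hQb : ∀ c, Qc c = ∑ j, (σS j * b j c) • φS j := by
    intro c
    rw [hQs c]
    calc (∑ m, lam c.1 (Fin.castLE (hN c.1) c.2) m • s c.1 m)
        = ∑ m, ∑ j, (lam c.1 (Fin.castLE (hN c.1) c.2) m
            * (σS j * lamS j (e' ⟨c.1, m⟩))) • φS j := by
          refine Finset.sum_congr rfl fun m _ => ?_
          rw [hsS c.1 m, Finset.smul_sum]
          refine Finset.sum_congr rfl fun j _ => ?_
          rw [smul_smul]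
      _ = ∑ j, (∑ m, lam c.1 (Fin.castLE (hN c.1) c.2) m
            * (σS j * lamS j (e' ⟨c.1, m⟩))) • φS j := by
          rw [Finset.sum_comm]
          refine Finset.sum_congr rfl fun j _ => ?_
          rw [Finset.sum_smul]
      _ = ∑ j, (σS j * b j c) • φS j := by
          refine Finset.sum_congr rfl fun j _ => ?_
          congr 1
          rw [hbdef, Finset.mul_sum]
          refine Finset.sum_congr rfl fun m _ => ?_
          ring
  -- Step 2: Bessel inequality for the coefficients b
  have hbB : ∀ j, ∑ c, (b j c) ^ 2 ≤ 1 := by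
    intro j
    set wv : ((i : Fin r) × Fin (N i)) → EuclideanSpace ℝ (Fin Kt) :=
      fun c => WithLp.toLp 2 (fun p => if h : (e'.symm p).1 = c.1
        then lam c.1 (Fin.castLE (hN c.1) c.2) (Fin.cast (congrArg k h) (e'.symm p).2)
        else 0) with hwvdef
    have hwv_same : ∀ (i1 : Fin r) (n1 : Fin (N i1)) (m : Fin (k i1)),
        wv ⟨i1, n1⟩ (e' ⟨i1, m⟩) = lam i1 (Fin.castLE (hN i1) n1) m := by
      intro i1 n1 m
      simp only [hwvdef]
      rw [e'.symm_apply_apply, dif_pos rfl]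
      exact congrArg _ (Fin.ext rfl)
    have hwv_ne : ∀ (c : (i : Fin r) × Fin (N i)) (q : (i : Fin r) × Fin (k i)),
        q.1 ≠ c.1 → wv c (e' q) = 0 := by
      intro c q h
      simp only [hwvdef]
      rw [e'.symm_apply_apply, dif_neg h]
    have hwv_on : Orthonormal ℝ wv := by
      rw [orthonormal_iff_ite]
      rintro ⟨i1, n1⟩ ⟨i2, n2⟩
      rw [PiLp.inner_apply]
      simp only [RCLike.inner_apply, conj_trivial]
      rw [Finset.sum_congr rfl fun x _ => mul_comm (wv ⟨i2, n2⟩ x) (wv ⟨i1, n1⟩ x)]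
      rw [← Equiv.sum_comp e' (fun p => wv ⟨i1, n1⟩ p * wv ⟨i2, n2⟩ p),
        ← Finset.univ_sigma_univ, Finset.sum_sigma]
      by_cases h : i1 = i2
      · subst h
        rw [Finset.sum_eq_single i1]
        · have hterm : ∀ m : Fin (k i1), wv ⟨i1, n1⟩ (e' ⟨i1, m⟩) * wv ⟨i1, n2⟩ (e' ⟨i1, m⟩)
              = lam i1 (Fin.castLE (hN i1) n1) m * lam i1 (Fin.castLE (hN i1) n2) m := by
            intro m
            rw [hwv_same i1 n1, hwv_same i1 n2]
          rw [Finset.sum_congr rfl (fun m _ => hterm m)]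
          have : ∑ m, lam i1 (Fin.castLE (hN i1) n1) m * lam i1 (Fin.castLE (hN i1) n2) m
              = (inner ℝ (lam i1 (Fin.castLE (hN i1) n1)) (lam i1 (Fin.castLE (hN i1) n2)) : ℝ) := by
            rw [PiLp.inner_apply]
            simp only [RCLike.inner_apply, conj_trivial]
            exact Finset.sum_congr rfl fun x _ => mul_comm _ _
          rw [this, orthonormal_iff_ite.mp (hlam i1)]
          by_cases hn : n1 = n2
          · subst hn; simp
          · have h1 : ¬ (Fin.castLE (hN i1) n1 = Fin.castLE (hN i1) n2) := by
              intro hcon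
              exact hn (Fin.castLE_inj.mp hcon)
            have h2 : ¬ ((⟨i1, n1⟩ : (i : Fin r) × Fin (N i)) = ⟨i1, n2⟩) := by
              intro hcon
              exact hn (eq_of_heq (Sigma.mk.inj_iff.mp hcon).2)
            rw [if_neg h1, if_neg h2]
        · intro i _ hi
          apply Finset.sum_eq_zero
          intro m _
          rw [hwv_ne ⟨i1, n1⟩ ⟨i, m⟩ hi]
          ring
        · intro habs; exact absurd (Finset.mem_univ i1) habs
      · have hz : ∀ (i : Fin r), ∀ m ∈ (univ : Finset (Fin (k i))),
            wv ⟨i1, n1⟩ (e' ⟨i, m⟩) * wv ⟨i2, n2⟩ (e' ⟨i, m⟩) = 0 := by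
          intro i m _
          by_cases h1 : i = i1
          · have h2 : (⟨i, m⟩ : (i : Fin r) × Fin (k i)).1 ≠ i2 :=
              fun hcon => h (h1.symm.trans hcon)
            rw [hwv_ne ⟨i2, n2⟩ ⟨i, m⟩ h2]
            ring
          · rw [hwv_ne ⟨i1, n1⟩ ⟨i, m⟩ h1]
            ring
        rw [Finset.sum_congr rfl (fun i _ => Finset.sum_eq_zero (hz i))]
        have : ¬ ((⟨i1, n1⟩ : (i : Fin r) × Fin (N i)) = ⟨i2, n2⟩) := by
          intro hcon
          exact h (congrArg Sigma.fst hcon)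
        rw [if_neg this]
        simp
    have hb_inner : ∀ c, b j c = inner ℝ (wv c) (lamS j) := by
      intro c
      rw [PiLp.inner_apply]
      simp only [RCLike.inner_apply, conj_trivial]
      rw [Finset.sum_congr rfl fun x _ => mul_comm (lamS j x) (wv c x)]
      rw [← Equiv.sum_comp e' (fun p => wv c p * lamS j p),
        ← Finset.univ_sigma_univ, Finset.sum_sigma]
      rw [Finset.sum_eq_single c.1]
      · have hterm : ∀ m : Fin (k c.1), wv c (e' ⟨c.1, m⟩) * lamS j (e' ⟨c.1, m⟩)
            = lam c.1 (Fin.castLE (hN c.1) c.2) m * lamS j (e' ⟨c.1, m⟩) := by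
          intro m
          obtain ⟨i, n'⟩ := c
          rw [hwv_same]
        rw [Finset.sum_congr rfl (fun m _ => hterm m)]
      · intro i _ hi
        apply Finset.sum_eq_zero
        intro m _
        rw [hwv_ne c ⟨i, m⟩ hi]
        ring
      · intro habs; exact absurd (Finset.mem_univ c.1) habs
    calc ∑ c, (b j c) ^ 2 = ∑ c, ‖(inner ℝ (wv c) (lamS j) : ℝ)‖ ^ 2 := by
          refine Finset.sum_congr rfl fun c _ => ?_
          rw [← hb_inner c, Real.norm_eq_abs, sq_abs]
      _ ≤ ‖lamS j‖ ^ 2 := hwv_on.sum_inner_products_le (lamS j)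
      _ = 1 := by rw [hlamS.1 j, one_pow]
  -- Step 3: resolving sums against μ
  have key2 : ∀ gg : Fin K → ℝ,
      ∑ c, (∑ jK, gg jK * μ jK (e c)) ^ 2 = ∑ jK, gg jK ^ 2 := by
    intro gg
    rw [Equiv.sum_comp e (fun p => (∑ jK, gg jK * μ jK p) ^ 2)]
    have h2 : ∀ p : Fin K, ∑ jK, gg jK * μ jK p = (∑ jK, gg jK • μ jK) p := by
      intro p
      simp
    calc ∑ p, (∑ jK, gg jK * μ jK p) ^ 2
        = ∑ p, (∑ jK, gg jK • μ jK) p * (∑ jK, gg jK • μ jK) p := by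
          refine Finset.sum_congr rfl fun p _ => ?_
          rw [← h2 p, sq]
      _ = (inner ℝ (∑ jK, gg jK • μ jK) (∑ jK, gg jK • μ jK) : ℝ) := by
          rw [PiLp.inner_apply]
          simp only [RCLike.inner_apply, conj_trivial]
      _ = ∑ jK, gg jK ^ 2 := by
          rw [hμ.inner_sum]
          simp [sq]
  -- the main tail comparison
  have key : ∀ n : ℕ,
      ∑ jK ∈ univ.filter (fun jK : Fin K => n ≤ (jK : ℕ)), τ jK ^ 2
        ≤ ∑ j ∈ univ.filter (fun j : Fin Kt => n ≤ (j : ℕ)), σS j ^ 2 := by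
    intro n
    set w : Fin K → ℝ :=
      fun jK => ∑ t ∈ univ.filter (fun t : Fin Kt => (t : ℕ) < n), (⟪φS t, Φ jK⟫) ^ 2 with hwdef
    -- inner products of φS with Qc, via b
    have hφSQ : ∀ (t : Fin Kt) c, ⟪φS t, Qc c⟫ = σS t * b t c := by
      intro t c
      rw [hQb c]
      exact hφS.inner_right_fintype (fun j => σS j * b j c) t
    -- ⟪Qc, Qc⟫ via b
    have hQnb : ∀ c, ⟪Qc c, Qc c⟫ = ∑ j, (σS j * b j c) ^ 2 := by
      intro c
      rw [hQb c, hφS.inner_sum]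
      simp [sq]
    -- ⟪Qc, Qc⟫ via τ
    have hQnτ : ∀ c, ⟪Qc c, Qc c⟫ = ∑ jK, (τ jK * μ jK (e c)) ^ 2 := by
      intro c
      have h1 : Qc c = ∑ jK, (τ jK * μ jK (e c)) • Φ jK := by
        rw [hQcdef]; exact hQ c.1 c.2
      rw [h1, hΦ.inner_sum]
      simp [sq]
    -- ⟪φS t, Qc c⟫ via τ
    have hφSQτ : ∀ (t : Fin Kt) c,
        ⟪φS t, Qc c⟫ = ∑ jK, (τ jK * ⟪φS t, Φ jK⟫) * μ jK (e c) := by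
      intro t c
      have h1 : Qc c = ∑ jK, (τ jK * μ jK (e c)) • Φ jK := by
        rw [hQcdef]; exact hQ c.1 c.2
      rw [h1, inner_sum]
      apply Finset.sum_congr rfl
      intro jK _
      rw [real_inner_smul_right]; ring
    -- S1
    have hS1 : ∑ c, ⟪Qc c, Qc c⟫ = ∑ jK, τ jK ^ 2 := by
      simp_rw [hQnτ]
      rw [Finset.sum_comm]
      refine Finset.sum_congr rfl fun jK _ => ?_
      rw [Equiv.sum_comp e (fun p => (τ jK * μ jK p) ^ 2)]
      have h1 : ∑ p, (τ jK * μ jK p) ^ 2 = τ jK ^ 2 * ∑ p, μ jK p * μ jK p := by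
        rw [Finset.mul_sum]
        refine Finset.sum_congr rfl fun p _ => ?_
        ring
      have h2 : ∑ p, μ jK p * μ jK p = (inner ℝ (μ jK) (μ jK) : ℝ) := by
        rw [PiLp.inner_apply]
        simp only [RCLike.inner_apply, conj_trivial]
      rw [h1, h2, orthonormal_iff_ite.mp hμ jK jK, if_pos rfl, mul_one]
    -- S2
    have hS2 : ∑ c, ∑ t ∈ univ.filter (fun t : Fin Kt => (t : ℕ) < n), (⟪φS t, Qc c⟫) ^ 2
        = ∑ jK, τ jK ^ 2 * w jK := by
      rw [Finset.sum_comm]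
      have hone : ∀ t ∈ univ.filter (fun t : Fin Kt => (t : ℕ) < n),
          ∑ c, (⟪φS t, Qc c⟫) ^ 2 = ∑ jK, (τ jK * ⟪φS t, Φ jK⟫) ^ 2 := by
        intro t _
        have := key2 (fun jK => τ jK * ⟪φS t, Φ jK⟫)
        simp only at this
        rw [← this]
        refine Finset.sum_congr rfl fun c _ => ?_
        rw [hφSQτ t c]
      rw [Finset.sum_congr rfl hone, Finset.sum_comm]
      refine Finset.sum_congr rfl fun jK _ => ?_
      rw [hwdef, Finset.mul_sum]
      refine Finset.sum_congr rfl fun t _ => ?_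
      ring
    -- weights bounds
    have hw0 : ∀ jK, 0 ≤ w jK := by
      intro jK; exact Finset.sum_nonneg fun t _ => sq_nonneg _
    have hw1 : ∀ jK, w jK ≤ 1 := by
      intro jK
      have hb := hφS.sum_inner_products_le (Φ jK)
        (s := univ.filter (fun t : Fin Kt => (t : ℕ) < n))
      rw [hΦ.1 jK, one_pow] at hb
      refine le_trans (le_of_eq ?_) hb
      refine Finset.sum_congr rfl fun t _ => ?_
      rw [Real.norm_eq_abs, sq_abs]
    have hwsum : ∑ jK, w jK ≤ (n : ℝ) := by
      have hswap : ∑ jK, w jK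
          = ∑ t ∈ univ.filter (fun t : Fin Kt => (t : ℕ) < n), ∑ jK, (⟪φS t, Φ jK⟫) ^ 2 := by
        simp only [hwdef]
        rw [Finset.sum_comm]
      rw [hswap]
      have hb : ∀ t : Fin Kt, ∑ jK, (⟪φS t, Φ jK⟫) ^ 2 ≤ 1 := by
        intro t
        have hb2 := hΦ.sum_inner_products_le (φS t) (s := (univ : Finset (Fin K)))
        rw [hφS.1 t, one_pow] at hb2
        refine le_trans (le_of_eq ?_) hb2
        refine Finset.sum_congr rfl fun jK _ => ?_
        rw [Real.norm_eq_abs, sq_abs, real_inner_comm]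
      have hcard : ((univ.filter (fun t : Fin Kt => (t : ℕ) < n)).card : ℝ) ≤ (n : ℝ) := by
        have : (univ.filter (fun t : Fin Kt => (t : ℕ) < n)).card ≤ (Finset.range n).card := by
          refine Finset.card_le_card_of_injOn (fun x : Fin Kt => (x : ℕ)) ?_ ?_
          · intro t ht
            simp only [Finset.coe_range, Set.mem_Iio]
            exact (Finset.mem_filter.mp ht).2
          · intro t1 _ t2 _ h12
            exact Fin.ext h12
        rw [Finset.card_range] at this
        exact_mod_cast this
      calc ∑ t ∈ univ.filter (fun t : Fin Kt => (t : ℕ) < n), ∑ jK, (⟪φS t, Φ jK⟫) ^ 2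
          ≤ ∑ _t ∈ univ.filter (fun t : Fin Kt => (t : ℕ) < n), (1 : ℝ) :=
            Finset.sum_le_sum fun t _ => hb t
        _ = ((univ.filter (fun t : Fin Kt => (t : ℕ) < n)).card : ℝ) := by
            rw [Finset.sum_const, nsmul_eq_mul, mul_one]
        _ ≤ (n : ℝ) := hcard
    -- energy difference equals tail in the σS basis
    have hdiff : ∑ jK, τ jK ^ 2 - ∑ jK, τ jK ^ 2 * w jK
        ≤ ∑ j ∈ univ.filter (fun j : Fin Kt => n ≤ (j : ℕ)), σS j ^ 2 := by
      rw [← hS1, ← hS2, ← Finset.sum_sub_distrib]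
      have hper : ∀ c, ⟪Qc c, Qc c⟫
            - ∑ t ∈ univ.filter (fun t : Fin Kt => (t : ℕ) < n), (⟪φS t, Qc c⟫) ^ 2
          = ∑ t ∈ univ.filter (fun t : Fin Kt => n ≤ (t : ℕ)), (σS t * b t c) ^ 2 := by
        intro c
        have hsplit := Finset.sum_filter_add_sum_filter_not (univ : Finset (Fin Kt))
          (fun t : Fin Kt => (t : ℕ) < n) (fun t => (σS t * b t c) ^ 2)
        have hfilt : (univ.filter fun t : Fin Kt => ¬ (t : ℕ) < n)
            = univ.filter fun t : Fin Kt => n ≤ (t : ℕ) := by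
          apply Finset.filter_congr; intro t _; simp [not_lt]
        rw [hfilt] at hsplit
        have hlow : ∑ t ∈ univ.filter (fun t : Fin Kt => (t : ℕ) < n), (⟪φS t, Qc c⟫) ^ 2
            = ∑ t ∈ univ.filter (fun t : Fin Kt => (t : ℕ) < n), (σS t * b t c) ^ 2 := by
          refine Finset.sum_congr rfl fun t _ => ?_
          rw [hφSQ t c]
        rw [hQnb c, hlow]
        linarith [hsplit]
      rw [Finset.sum_congr rfl fun c _ => hper c, Finset.sum_comm]
      refine Finset.sum_le_sum fun t _ => ?_
      have h1 : ∑ c, (σS t * b t c) ^ 2 = σS t ^ 2 * ∑ c, (b t c) ^ 2 := by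
        rw [Finset.mul_sum]
        refine Finset.sum_congr rfl fun c _ => ?_
        ring
      rw [h1]
      calc σS t ^ 2 * ∑ c, (b t c) ^ 2 ≤ σS t ^ 2 * 1 :=
            mul_le_mul_of_nonneg_left (hbB t) (sq_nonneg _)
        _ = σS t ^ 2 := mul_one _
    have hrearr := hapod_aux_rearrange n (fun jK => τ jK ^ 2) w
      (by
        intro a c hac
        exact pow_le_pow_left₀ (hτ0 c) (hτa hac) 2)
      (fun j => sq_nonneg _) hw0 hw1 hwsum
    linarith [hrearr, hdiff]
  -- conclude by comparing the two sInf's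
  have hBne : {n : ℕ | ∑ j ∈ univ.filter (fun j : Fin Kt => n ≤ (j : ℕ)), σS j ^ 2 ≤ ερ ^ 2}.Nonempty := by
    refine ⟨Kt, ?_⟩
    have : (univ.filter fun j : Fin Kt => Kt ≤ (j : ℕ)) = ∅ := by
      apply Finset.filter_false_of_mem
      intro j _
      exact not_le.mpr j.2
    simp only [Set.mem_setOf_eq, this, Finset.sum_empty]
    exact sq_nonneg _
  have hmem := Nat.sInf_mem hBne
  apply Nat.sInf_le
  exact le_trans (key _) hmem
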